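/- Every function F ∈ F_ND, defined on B₂ by F(z₁, z₂) = (z₁² + 2√(1−a²) z₂)/(2−a²) for a ∈ [0,1), maps the open unit Euclidean ball B₂ ⊂ ℂ² into the closed unit disc; moreover if a > 0 it maps B₂ into the open unit disc 𝔻. -/

import Mathlib

set_option maxHeartbeats 1000000

theorem stmt11 (a : ℝ) (ha0 : 0 ≤ a) (ha1 : a < 1) :
    (∀ z : EuclideanSpace ℂ (Fin 2), ‖z‖ < 1 →
      ‖(z 0 ^ 2 + 2 * (Real.sqrt (1 - a ^ 2) : ℂ) * z 1) / ((2 - a ^ 2 : ℝ) : ℂ)‖ ≤ 1) ∧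
    (0 < a → ∀ z : EuclideanSpace ℂ (Fin 2), ‖z‖ < 1 →
      ‖(z 0 ^ 2 + 2 * (Real.sqrt (1 - a ^ 2) : ℂ) * z 1) / ((2 - a ^ 2 : ℝ) : ℂ)‖ < 1) := by
  have ha2 : a ^ 2 < 1 := by nlinarith
  have hd : (0:ℝ) < 2 - a ^ 2 := by nlinarith
  have hc : Real.sqrt (1 - a ^ 2) ^ 2 = 1 - a ^ 2 := Real.sq_sqrt (by nlinarith)
  have hcnn : 0 ≤ Real.sqrt (1 - a ^ 2) := Real.sqrt_nonneg _
  have key : ∀ z : EuclideanSpace ℂ (Fin 2), ‖z‖ < 1 →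
      ‖(z 0 ^ 2 + 2 * (Real.sqrt (1 - a ^ 2) : ℂ) * z 1) / ((2 - a ^ 2 : ℝ) : ℂ)‖ < 1 := by
    intro z hz
    set c := Real.sqrt (1 - a ^ 2) with hcdef
    have hsum : ‖z 0‖ ^ 2 + ‖z 1‖ ^ 2 < 1 := by
      have h1 : ‖z‖ ^ 2 < 1 := by
        have := norm_nonneg z
        nlinarith
      have h2 : ‖z‖ ^ 2 = ‖z 0‖ ^ 2 + ‖z 1‖ ^ 2 := by
        rw [EuclideanSpace.norm_eq, Real.sq_sqrt (by positivity)]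
        simp [Fin.sum_univ_two]
      simpa [h2] using h1
    have htri : ‖z 0 ^ 2 + 2 * (c : ℂ) * z 1‖
        ≤ ‖z 0‖ ^ 2 + 2 * c * ‖z 1‖ := by
      calc ‖z 0 ^ 2 + 2 * (c : ℂ) * z 1‖
          ≤ ‖z 0 ^ 2‖ + ‖2 * (c : ℂ) * z 1‖ := norm_add_le _ _
        _ = ‖z 0‖ ^ 2 + 2 * c * ‖z 1‖ := by
            rw [norm_pow, norm_mul, norm_mul]
            simp [abs_of_nonneg hcnn]
    have hnum : ‖z 0 ^ 2 + 2 * (c : ℂ) * z 1‖ < 2 - a ^ 2 := by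
      have h1 : ‖z 0‖ ^ 2 + 2 * c * ‖z 1‖ < 1 + c ^ 2 := by
        nlinarith [sq_nonneg (c - ‖z 1‖), norm_nonneg (z 1)]
      have : (1:ℝ) + c ^ 2 = 2 - a ^ 2 := by rw [hc]; ring
      linarith
    rw [norm_div, Complex.norm_real, Real.norm_eq_abs, abs_of_pos hd, div_lt_one hd]
    exact hnum
  exact ⟨fun z hz => (key z hz).le, fun _ z hz => key z hz⟩
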